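/- Let (X_t)_{t∈ℕ} be a sequence of real random variables adapted to a filtration (F_t), and let T = inf{t : X_t ≤ 0}. Suppose there is δ > 0 such that for all t, E[(X_t − X_{t+1})·1{t<T} | F_t] ≥ δ·1{t<T}, and for all t, X_t·1{t≤T} ≥ 0. Then E[T] ≤ E[X₀]/δ. -/

import Mathlib

open MeasureTheory Set
open scoped ENNReal

/-- Additive drift theorem: if the process drops by at least `δ` in expectation while
running and stays nonnegative up to the hitting time `T` of `(-∞, 0]`, then
`E[T] ≤ E[X₀]/δ`. -/
theorem stmt_13 {Ω : Type*} {m0 : MeasurableSpace Ω} (μ : Measure Ω)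
    [IsProbabilityMeasure μ] (ℱ : Filtration ℕ m0) (X : ℕ → Ω → ℝ)
    (hadapted : Adapted ℱ X) (hint : ∀ t, Integrable (X t) μ)
    (T : Ω → ℝ≥0∞) (hT : ∀ ω, T ω = ⨅ t ∈ {t : ℕ | X t ω ≤ 0}, (t : ℝ≥0∞))
    (δ : ℝ) (hδ : 0 < δ)
    (hdrift : ∀ t : ℕ,
      (fun ω => δ * indicator {ω | (t : ℝ≥0∞) < T ω} (fun _ => (1 : ℝ)) ω)
        ≤ᵐ[μ] μ[fun ω =>
          (X t ω - X (t + 1) ω) * indicator {ω | (t : ℝ≥0∞) < T ω} (fun _ => (1 : ℝ)) ω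
          | ℱ t])
    (hnonneg : ∀ t : ℕ, ∀ ω, (t : ℝ≥0∞) ≤ T ω → 0 ≤ X t ω) :
    ∫⁻ ω, T ω ∂μ ≤ ENNReal.ofReal ((∫ ω, X 0 ω ∂μ) / δ) := by
  classical
  set A : ℕ → Set Ω := fun t => {ω | (t : ℝ≥0∞) < T ω} with hAdef
  have hmeasX : ∀ s, Measurable (X s) := fun s =>
    (hadapted s).mono (ℱ.le s) le_rfl
  -- basic computations of T
  have hTeq : ∀ ω (hex : ∃ s, X s ω ≤ 0), T ω = (Nat.find hex : ℝ≥0∞) := by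
    intro ω hex
    refine le_antisymm ?_ ?_
    · rw [hT]; exact iInf₂_le (Nat.find hex) (show Nat.find hex ∈ {t : ℕ | X t ω ≤ 0} from Nat.find_spec hex)
    · rw [hT]; exact le_iInf₂ fun s hs => Nat.cast_le.mpr (Nat.find_min' hex hs)
  have hTinf : ∀ ω, (∀ s, 0 < X s ω) → T ω = ∞ := by
    intro ω h
    rw [hT]
    have he : {t : ℕ | X t ω ≤ 0} = ∅ := by
      ext s; simp [not_le.mpr (h s)]
    simp [he]
  -- characterization of membership in A t
  have hchar : ∀ t ω, ω ∈ A t ↔ ∀ s ≤ t, 0 < X s ω := by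
    intro t ω
    constructor
    · intro h s hs
      by_contra hns
      push_neg at hns
      have hex : ∃ s, X s ω ≤ 0 := ⟨s, hns⟩
      have h1 : T ω ≤ (s : ℝ≥0∞) := by
        rw [hTeq ω hex]; exact Nat.cast_le.mpr (Nat.find_min' hex hns)
      have h2 : (t : ℝ≥0∞) < T ω := h
      have : (t : ℝ≥0∞) < (s : ℝ≥0∞) := lt_of_lt_of_le h2 h1
      exact absurd (Nat.cast_lt.mp this) (not_lt.mpr hs)
    · intro h
      by_cases hex : ∃ s, X s ω ≤ 0
      · have hk : t < Nat.find hex := by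
          by_contra hle
          push_neg at hle
          exact absurd (h _ hle) (not_lt.mpr (Nat.find_spec hex))
        show (t : ℝ≥0∞) < T ω
        rw [hTeq ω hex]; exact_mod_cast hk
      · push_neg at hex
        show (t : ℝ≥0∞) < T ω
        rw [hTinf ω hex]; exact lt_top_iff_ne_top.mpr (ENNReal.natCast_ne_top t)
  have hAmeas : ∀ t, MeasurableSet (A t) := by
    intro t
    have : A t = ⋂ s ∈ {s : ℕ | s ≤ t}, {ω | 0 < X s ω} := by
      ext ω; simp [hchar t ω]
    rw [this]
    exact MeasurableSet.biInter (to_countable _)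
      fun s _ => measurableSet_lt measurable_const (hmeasX s)
  -- rewrite the drift integrand as an indicator
  have hfeq : ∀ t : ℕ, (fun ω => (X t ω - X (t + 1) ω)
      * indicator {ω | (t : ℝ≥0∞) < T ω} (fun _ => (1 : ℝ)) ω)
      = (A t).indicator fun ω => X t ω - X (t + 1) ω := by
    intro t
    funext ω
    by_cases h : ω ∈ A t <;> simp [hAdef] at h ⊢ <;> simp [h]
  have hintf : ∀ t : ℕ, Integrable ((A t).indicator fun ω => X t ω - X (t + 1) ω) μ :=
    fun t => ((hint t).sub (hint (t + 1))).indicator (hAmeas t)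
  -- one-step expectation bound
  have hstep : ∀ t : ℕ, δ * (μ (A t)).toReal
      ≤ ∫ ω, (A t).indicator (fun ω => X t ω - X (t + 1) ω) ω ∂μ := by
    intro t
    have hg : Integrable (fun ω => δ * (A t).indicator (fun _ => (1 : ℝ)) ω) μ :=
      ((integrable_const (1 : ℝ)).indicator (hAmeas t)).const_mul δ
    have h1 : ∫ ω, δ * (A t).indicator (fun _ => (1 : ℝ)) ω ∂μ
        ≤ ∫ ω, (μ[fun ω => (X t ω - X (t + 1) ω)
            * indicator {ω | (t : ℝ≥0∞) < T ω} (fun _ => (1 : ℝ)) ω | ℱ t]) ω ∂μ :=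
      integral_mono_ae hg integrable_condExp (hdrift t)
    have h2 : ∫ ω, (μ[fun ω => (X t ω - X (t + 1) ω)
            * indicator {ω | (t : ℝ≥0∞) < T ω} (fun _ => (1 : ℝ)) ω | ℱ t]) ω ∂μ
        = ∫ ω, (A t).indicator (fun ω => X t ω - X (t + 1) ω) ω ∂μ := by
      rw [integral_condExp (ℱ.le t), hfeq t]
    have h3 : ∫ ω, δ * (A t).indicator (fun _ => (1 : ℝ)) ω ∂μ
        = δ * (μ (A t)).toReal := by
      rw [integral_const_mul, integral_indicator_const (1 : ℝ) (hAmeas t)]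
      simp [mul_comm, measureReal_def]
    calc δ * (μ (A t)).toReal = _ := h3.symm
      _ ≤ _ := h1
      _ = _ := h2
  -- key pointwise telescoping bound
  have hkey : ∀ n : ℕ, ∀ ω, ∑ t ∈ Finset.range n,
      (A t).indicator (fun ω => X t ω - X (t + 1) ω) ω ≤ X 0 ω := by
    intro n ω
    by_cases h : (n : ℝ≥0∞) ≤ T ω
    · have hmem : ∀ t ∈ Finset.range n, ω ∈ A t := by
        intro t ht
        show (t : ℝ≥0∞) < T ω
        exact lt_of_lt_of_le (by exact_mod_cast Finset.mem_range.mp ht) h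
      have : ∑ t ∈ Finset.range n, (A t).indicator (fun ω => X t ω - X (t + 1) ω) ω
          = ∑ t ∈ Finset.range n, (X t ω - X (t + 1) ω) := by
        refine Finset.sum_congr rfl fun t ht => ?_
        rw [Set.indicator_of_mem (hmem t ht)]
      rw [this, Finset.sum_range_sub']
      have := hnonneg n ω h
      linarith
    · push_neg at h
      have hex : ∃ s, X s ω ≤ 0 := by
        by_contra hne
        push_neg at hne
        rw [hTinf ω hne] at h
        exact absurd h (by simp)
      set k := Nat.find hex with hk
      have hTk : T ω = (k : ℝ≥0∞) := hTeq ω hex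
      have hkn : k < n := by
        rw [hTk] at h; exact_mod_cast h
      have hAiff : ∀ t, ω ∈ A t ↔ t < k := by
        intro t
        show (t : ℝ≥0∞) < T ω ↔ t < k
        rw [hTk]; exact_mod_cast Iff.rfl
      have hsub : ∑ t ∈ Finset.range n, (A t).indicator (fun ω => X t ω - X (t + 1) ω) ω
          = ∑ t ∈ Finset.range k, (X t ω - X (t + 1) ω) := by
        rw [← Finset.sum_subset (Finset.range_subset_range.mpr hkn.le)
          (f := fun t => (A t).indicator (fun ω => X t ω - X (t + 1) ω) ω)]
        · refine Finset.sum_congr rfl fun t ht => ?_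
          exact Set.indicator_of_mem ((hAiff t).mpr (Finset.mem_range.mp ht)) _
        · intro t _ ht
          exact Set.indicator_of_notMem (fun hm => ht (Finset.mem_range.mpr ((hAiff t).mp hm))) _
      rw [hsub, Finset.sum_range_sub']
      have := hnonneg k ω (le_of_eq hTk.symm)
      linarith
  -- summed bound
  have hsum0 : ∀ n : ℕ, δ * ∑ t ∈ Finset.range n, (μ (A t)).toReal ≤ ∫ ω, X 0 ω ∂μ := by
    intro n
    calc δ * ∑ t ∈ Finset.range n, (μ (A t)).toReal
        = ∑ t ∈ Finset.range n, δ * (μ (A t)).toReal := Finset.mul_sum _ _ _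
      _ ≤ ∑ t ∈ Finset.range n, ∫ ω, (A t).indicator (fun ω => X t ω - X (t + 1) ω) ω ∂μ :=
          Finset.sum_le_sum fun t _ => hstep t
      _ = ∫ ω, ∑ t ∈ Finset.range n, (A t).indicator (fun ω => X t ω - X (t + 1) ω) ω ∂μ :=
          (integral_finset_sum _ fun t _ => hintf t).symm
      _ ≤ ∫ ω, X 0 ω ∂μ :=
          integral_mono (integrable_finset_sum _ fun t _ => hintf t) (hint 0) (hkey n)
  -- partial sums of measures bounded
  have hsum : ∀ n : ℕ, ∑ t ∈ Finset.range n, μ (A t)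
      ≤ ENNReal.ofReal ((∫ ω, X 0 ω ∂μ) / δ) := by
    intro n
    have hr : ∑ t ∈ Finset.range n, (μ (A t)).toReal ≤ (∫ ω, X 0 ω ∂μ) / δ := by
      rw [le_div_iff₀ hδ, mul_comm]
      exact hsum0 n
    have he : ∑ t ∈ Finset.range n, μ (A t)
        = ENNReal.ofReal (∑ t ∈ Finset.range n, (μ (A t)).toReal) := by
      rw [ENNReal.ofReal_sum_of_nonneg fun t _ => ENNReal.toReal_nonneg]
      exact Finset.sum_congr rfl fun t _ => (ENNReal.ofReal_toReal (measure_ne_top μ _)).symm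
    rw [he]
    exact ENNReal.ofReal_le_ofReal hr
  -- T as a tsum of indicators
  have hTtsum : ∀ ω, T ω = ∑' t : ℕ, (A t).indicator (fun _ => (1 : ℝ≥0∞)) ω := by
    intro ω
    by_cases hex : ∃ s, X s ω ≤ 0
    · set k := Nat.find hex with hk
      have hTk : T ω = (k : ℝ≥0∞) := hTeq ω hex
      have hAiff : ∀ t, ω ∈ A t ↔ t < k := by
        intro t
        show (t : ℝ≥0∞) < T ω ↔ t < k
        rw [hTk]; exact_mod_cast Iff.rfl
      have h1 : ∀ t : ℕ, (A t).indicator (fun _ => (1 : ℝ≥0∞)) ω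
          = if t < k then 1 else 0 := by
        intro t
        by_cases h : t < k
        · rw [Set.indicator_of_mem ((hAiff t).mpr h)]; simp [h]
        · rw [Set.indicator_of_notMem (fun hm => h ((hAiff t).mp hm))]; simp [h]
      rw [tsum_congr h1, tsum_eq_sum (s := Finset.range k)
        (fun t ht => by simp [Finset.mem_range.not.mp ht])]
      rw [hTk]
      rw [Finset.sum_congr rfl fun t ht => if_pos (Finset.mem_range.mp ht)]
      simp
    · push_neg at hex
      rw [hTinf ω hex]
      have h1 : ∀ t : ℕ, (A t).indicator (fun _ => (1 : ℝ≥0∞)) ω = 1 := by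
        intro t
        refine Set.indicator_of_mem ?_ _
        show (t : ℝ≥0∞) < T ω
        rw [hTinf ω hex]
        exact lt_top_iff_ne_top.mpr (ENNReal.natCast_ne_top t)
      rw [tsum_congr h1]
      exact (ENNReal.tsum_const_eq_top_of_ne_zero one_ne_zero).symm
  -- conclude
  calc ∫⁻ ω, T ω ∂μ
      = ∫⁻ ω, ∑' t : ℕ, (A t).indicator (fun _ => (1 : ℝ≥0∞)) ω ∂μ :=
        lintegral_congr hTtsum
    _ = ∑' t : ℕ, ∫⁻ ω, (A t).indicator (fun _ => (1 : ℝ≥0∞)) ω ∂μ :=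
        lintegral_tsum fun t => (measurable_one.indicator (hAmeas t)).aemeasurable
    _ = ∑' t : ℕ, μ (A t) := by
        refine tsum_congr fun t => ?_
        rw [lintegral_indicator_const (hAmeas t)]
        simp
    _ = ⨆ n : ℕ, ∑ t ∈ Finset.range n, μ (A t) := ENNReal.tsum_eq_iSup_nat
    _ ≤ ENNReal.ofReal ((∫ ω, X 0 ω ∂μ) / δ) := iSup_le hsum
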